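/- Let J = {#₁, 1, 1̄, #₂, 2, 2̄, …, #_n, n, n̄} with total order #₁ < 1 < 1̄ < #₂ < 2 < 2̄ < ⋯ < #_n < n < n̄. A KT-tableau of shape with i boxes is a column of i entries from J, strictly increasing top to bottom, with the entry in row r at least #_r. Then the map s ↦ T(s) from the lattice points S(ϖ_i) of the orthosymplectic Dyck path polytope for the i-th fundamental weight of osp(1,2n) to the set of KT-tableaux with i boxes (defined by replacing entry r of the column (1,2,…,i) by s+1 if s_{α_{r,s}} ≠ 0, by s̄ if s_{α_{r,s̄}} ≠ 0, then replacing j by #_j if s_{δ_j} ≠ 0) is injective. -/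

import Mathlib

open scoped Classical

/-! Root combinatorics for `osp(1,2n)` (0-based indexing).
The positive even roots `α_{i,j} = α_i + ⋯ + α_j` (`1 ≤ i ≤ j ≤ n`) and
`α_{i,j̄} = α_i + ⋯ + α_n + α_{n-1} + ⋯ + α_j` (`1 ≤ i ≤ j ≤ n`, with
`α_{i,n̄} = α_{i,n}`) are encoded on a grid: `α_{i,j} ↦ (i-1, j-1)` and
`α_{i,j̄} ↦ (i-1, 2n-1-j)`, giving the set `{(r,c) : r ≤ c ≤ 2n-2-r}` of `n²` points.
In particular `2δ_i = α_{i,ī} ↦ (i-1, 2n-2-(i-1))` and the simple roots are the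
diagonal points `(i,i)`. The positive odd roots `δ_1,…,δ_n` are indexed by `Fin n`. -/

/-- The positive even roots of `osp(1,2n)`, as grid points. -/
abbrev EvenRoot (n : ℕ) :=
  {q : Fin n × Fin (2 * n - 1) // (q.1 : ℕ) ≤ (q.2 : ℕ) ∧ (q.2 : ℕ) ≤ 2 * n - 2 - (q.1 : ℕ)}

/-- Index set for the coordinates: positive even roots and positive odd roots `δ_1,…,δ_n`. -/
abbrev RootIdx (n : ℕ) := EvenRoot n ⊕ Fin n

/-- An orthosymplectic Dyck path: a monotone lattice path of positive even roots starting
at a simple root (a diagonal point) and either (a) ending at a simple even root `α_j`,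
`j < n` (`odd = false`), or (b) ending at `2δ_j` (an antidiagonal point), to which the odd
root `δ_i` (`i` the starting row) is appended (`odd = true`). -/
structure OSPath (n : ℕ) where
  len : ℕ
  p : Fin (len + 1) → EvenRoot n
  diag0 : ((p 0).1.1 : ℕ) = ((p 0).1.2 : ℕ)
  step : ∀ t : Fin len,
    (((p t.succ).1.1 : ℕ) = ((p t.castSucc).1.1 : ℕ) + 1 ∧
      ((p t.succ).1.2 : ℕ) = ((p t.castSucc).1.2 : ℕ)) ∨
    (((p t.succ).1.1 : ℕ) = ((p t.castSucc).1.1 : ℕ) ∧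
      ((p t.succ).1.2 : ℕ) = ((p t.castSucc).1.2 : ℕ) + 1)
  odd : Bool
  endc : if odd then ((p (Fin.last len)).1.2 : ℕ) = 2 * n - 2 - ((p (Fin.last len)).1.1 : ℕ)
    else ((p (Fin.last len)).1.1 : ℕ) = ((p (Fin.last len)).1.2 : ℕ) ∧
      ((p (Fin.last len)).1.1 : ℕ) + 1 < n

/-- The bound `M_p(λ)` for `λ = Σ m_i ϖ_i`: `m_i + ⋯ + m_j` for a path of type (a) from
`α_i` to `α_j`, and `m_i + ⋯ + m_n` for a path of type (b). -/
def OSPath.bound {n : ℕ} (P : OSPath n) (m : Fin n → ℕ) : ℕ :=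
  if P.odd then ∑ t ∈ Finset.univ.filter (fun t : Fin n => ((P.p 0).1.1 : ℕ) ≤ (t : ℕ)), m t
  else ∑ t ∈ Finset.univ.filter (fun t : Fin n =>
    ((P.p 0).1.1 : ℕ) ≤ (t : ℕ) ∧ (t : ℕ) ≤ ((P.p (Fin.last P.len)).1.1 : ℕ)), m t

/-- The sum `Σ_{α ∈ p} s_α` of the coordinates of `s` along the path. -/
def OSPath.pathSum {n : ℕ} (P : OSPath n) (s : RootIdx n → ℕ) : ℕ :=
  (∑ t, s (Sum.inl (P.p t))) + (if P.odd then s (Sum.inr (P.p 0).1.1) else 0)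

/-- The set `S(λ)` of lattice points of the orthosymplectic Dyck path polytope `P(λ)`. -/
def Sset (n : ℕ) (m : Fin n → ℕ) : Set (RootIdx n → ℕ) :=
  {s | (∀ P : OSPath n, P.pathSum s ≤ P.bound m) ∧ ∀ j : Fin n, s (Sum.inr j) ≤ 1}

/-- The exponent of `s` at the even grid point `(r,c)` (in ℕ-coordinates), `0` if `(r,c)`
is not a valid grid point. -/
def sval (n : ℕ) (s : RootIdx n → ℕ) (r c : ℕ) : ℕ :=
  if h : r < n ∧ c < 2 * n - 1 ∧ r ≤ c ∧ c ≤ 2 * n - 2 - r then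
    s (Sum.inl ⟨(⟨r, h.1⟩, ⟨c, h.2.1⟩), h.2.2.1, h.2.2.2⟩)
  else 0

/-- The exponent of `s` at the odd root `δ_{j+1}`, `0` if `j ≥ n`. -/
def oval (n : ℕ) (s : RootIdx n → ℕ) (j : ℕ) : ℕ :=
  if h : j < n then s (Sum.inr ⟨j, h⟩) else 0

/-- The entry (in the alphabet `Fin (3n)` with `#_{r+1} = 3r`, `r+1 = 3r+1`,
`(r+1)‾ = 3r+2`) placed in row `r` before the odd replacement: the entry `r+1` of the
column `(1,…,i)` is replaced by `s'+1` if `s_{α_{r+1,s'}} ≠ 0` (with `n+1 = n̄`) and by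
`s̄'` if `s_{α_{r+1,s̄'}} ≠ 0`; in grid coordinates, a nonzero entry at `(r,c)` yields
`c+2` (i.e. `3(c+1)+1`) if `c ≤ n-2`, `n̄` if `c = n-1`, and `(2n-1-c)‾` if `c ≥ n`. -/
noncomputable def erow (n : ℕ) (s : RootIdx n → ℕ) (r : ℕ) : ℕ :=
  if ∃ c, sval n s r c ≠ 0 then
    let c := sInf {c | sval n s r c ≠ 0}
    if c + 2 ≤ n then 3 * (c + 1) + 1 else if c + 1 = n then 3 * (n - 1) + 2
    else 3 * (2 * n - 2 - c) + 2
  else 3 * r + 1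

/-- The odd replacement: an entry `j` (encoded `3(j-1)+1`) is replaced by `#_j`
(encoded `3(j-1)`) whenever `s_{δ_j} ≠ 0`. -/
def oddRepl (n : ℕ) (s : RootIdx n → ℕ) (v : ℕ) : ℕ :=
  if v % 3 = 1 ∧ oval n s (v / 3) ≠ 0 then v - 1 else v

/-- The KT-tableau `T(s)` associated to `s`, as its (sorted) set of entries. -/
noncomputable def KTmap (n : ℕ) (i : ℕ) (s : RootIdx n → ℕ) : Finset ℕ :=
  (Finset.range i).image fun r => oddRepl n s (erow n s r)

/-- Generic path constructor from a coordinate function. -/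
def ofFn (n len : ℕ) (f : ℕ → ℕ × ℕ) (odd : Bool)
    (hvalid : ∀ t, t ≤ len → (f t).1 < n ∧ (f t).2 < 2*n-1 ∧ (f t).1 ≤ (f t).2 ∧
      (f t).2 ≤ 2*n-2-(f t).1)
    (hdiag : (f 0).1 = (f 0).2)
    (hstep : ∀ t, t < len → ((f (t+1)).1 = (f t).1 + 1 ∧ (f (t+1)).2 = (f t).2) ∨
      ((f (t+1)).1 = (f t).1 ∧ (f (t+1)).2 = (f t).2 + 1))
    (hend : if odd then (f len).2 = 2*n-2-(f len).1
      else (f len).1 = (f len).2 ∧ (f len).1 + 1 < n) : OSPath n where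
  len := len
  p := fun t => ⟨(⟨(f t).1, (hvalid t (Nat.lt_succ_iff.mp t.2)).1⟩,
      ⟨(f t).2, (hvalid t (Nat.lt_succ_iff.mp t.2)).2.1⟩),
      (hvalid t (Nat.lt_succ_iff.mp t.2)).2.2.1, (hvalid t (Nat.lt_succ_iff.mp t.2)).2.2.2⟩
  diag0 := by simpa using hdiag
  step := fun t => by simpa using hstep t t.2
  odd := odd
  endc := by
    cases odd with
    | false => simpa using hend
    | true => simpa using hend

lemma ofFn_p_coords (n len : ℕ) (f : ℕ → ℕ × ℕ) (odd : Bool) (hv) (hd) (hst) (he)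
    (t : Fin (len+1)) :
    (((ofFn n len f odd hv hd hst he).p t).1.1 : ℕ) = (f t).1 ∧
    (((ofFn n len f odd hv hd hst he).p t).1.2 : ℕ) = (f t).2 := ⟨rfl, rfl⟩

lemma sval_inl {n : ℕ} (s : RootIdx n → ℕ) (q : EvenRoot n) :
    sval n s q.1.1 q.1.2 = s (Sum.inl q) := by
  have h : (q.1.1 : ℕ) < n ∧ (q.1.2 : ℕ) < 2*n-1 ∧ (q.1.1 : ℕ) ≤ (q.1.2 : ℕ) ∧
      (q.1.2 : ℕ) ≤ 2*n-2-(q.1.1 : ℕ) := ⟨q.1.1.2, q.1.2.2, q.2.1, q.2.2⟩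
  rw [sval, dif_pos h]
lemma pathSum_ge_one {n : ℕ} (P : OSPath n) (s : RootIdx n → ℕ) (t : Fin (P.len+1)) :
    s (Sum.inl (P.p t)) + (if P.odd then s (Sum.inr (P.p 0).1.1) else 0) ≤ P.pathSum s := by
  unfold OSPath.pathSum
  gcongr
  exact Finset.single_le_sum (f := fun t => s (Sum.inl (P.p t))) (fun _ _ => Nat.zero_le _)
    (Finset.mem_univ t)

lemma pathSum_ge_two {n : ℕ} (P : OSPath n) (s : RootIdx n → ℕ) (t1 t2 : Fin (P.len+1))
    (h : t1 ≠ t2) :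
    s (Sum.inl (P.p t1)) + s (Sum.inl (P.p t2)) ≤ P.pathSum s := by
  unfold OSPath.pathSum
  have : s (Sum.inl (P.p t1)) + s (Sum.inl (P.p t2)) =
      ∑ t ∈ ({t1, t2} : Finset _), s (Sum.inl (P.p t)) := by
    rw [Finset.sum_pair h]
  rw [this]
  exact le_trans (Finset.sum_le_sum_of_subset (Finset.subset_univ _)) (Nat.le_add_right _ _)

lemma bound_odd {n : ℕ} (P : OSPath n) (i : Fin n) (h : P.odd = true) :
    P.bound (Pi.single i 1) = if ((P.p 0).1.1 : ℕ) ≤ (i : ℕ) then 1 else 0 := by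
  unfold OSPath.bound
  rw [h, if_pos rfl, Finset.sum_pi_single']
  simp

lemma bound_even {n : ℕ} (P : OSPath n) (i : Fin n) (h : P.odd = false) :
    P.bound (Pi.single i 1) =
      if ((P.p 0).1.1 : ℕ) ≤ (i : ℕ) ∧ (i : ℕ) ≤ ((P.p (Fin.last P.len)).1.1 : ℕ)
      then 1 else 0 := by
  unfold OSPath.bound
  rw [h]
  simp only [Bool.false_eq_true, if_false, Finset.sum_pi_single']
  simp
lemma sval_support {n : ℕ} {s : RootIdx n → ℕ} {r c : ℕ} (h : sval n s r c ≠ 0) :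
    r < n ∧ r ≤ c ∧ c ≤ 2*n-2-r := by
  by_contra hc
  apply h
  rw [sval, dif_neg]
  intro ⟨h1, h2, h3, h4⟩
  exact hc ⟨h1, h3, h4⟩

/-- The full-row odd path along row `r`. -/
def rowPath (n r : ℕ) (hr : r < n) : OSPath n :=
  ofFn n (2*n-2-2*r) (fun t => (r, r+t)) true
    (by intro t ht; dsimp only; omega)
    (by simp)
    (by intro t ht; dsimp only; omega)
    (by simp only [if_true]; omega)

lemma rowPath_sval {n r : ℕ} (hr : r < n) (s : RootIdx n → ℕ) {c : ℕ}
    (hc1 : r ≤ c) (hc2 : c ≤ 2*n-2-r) :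
    s (Sum.inl ((rowPath n r hr).p ⟨c - r, by simp only [rowPath, ofFn]; omega⟩)) =
      sval n s r c := by
  refine Eq.trans (sval_inl s _).symm ?_
  show sval n s r (r + (c - r)) = sval n s r c
  congr 1
  omega

lemma rowPath_oval {n r : ℕ} (hr : r < n) (s : RootIdx n → ℕ) :
    s (Sum.inr ((rowPath n r hr).p 0).1.1) = oval n s r := by
  rw [oval, dif_pos hr]
  rfl
section Facts
variable {n : ℕ} {i : Fin n} {s : RootIdx n → ℕ}

lemma oval_big {s : RootIdx n → ℕ} {j : ℕ} (hj : n ≤ j) : oval n s j = 0 := by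
  rw [oval, dif_neg]; omega

/-- Single entry plus odd value in a row is bounded. -/
lemma row_le (hs : s ∈ Sset n (Pi.single i 1)) (r c : ℕ) :
    sval n s r c + oval n s r ≤ if r ≤ (i : ℕ) then 1 else 0 := by
  by_cases hr : r < n
  · have hb := hs.1 (rowPath n r hr)
    rw [bound_odd _ i rfl] at hb
    have hstart : (((rowPath n r hr).p 0).1.1 : ℕ) = r := rfl
    rw [hstart] at hb
    by_cases hv : sval n s r c = 0
    · rw [hv, Nat.zero_add]
      refine le_trans ?_ hb
      refine le_trans ?_ (pathSum_ge_one _ s 0)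
      rw [if_pos (show (rowPath n r hr).odd = true from rfl), rowPath_oval hr s]
      exact Nat.le_add_left _ _
    · obtain ⟨_, hc1, hc2⟩ := sval_support hv
      refine le_trans ?_ hb
      refine le_trans ?_ (pathSum_ge_one _ s ⟨c - r, by simp only [rowPath, ofFn]; omega⟩)
      rw [if_pos (show (rowPath n r hr).odd = true from rfl), rowPath_oval hr s, rowPath_sval hr s hc1 hc2]
  · have h1 : sval n s r c = 0 := by
      by_contra hv; exact hr (sval_support hv).1
    have h2 : oval n s r = 0 := oval_big (by omega)
    simp [h1, h2]

/-- Two distinct entries in a row are bounded. -/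
lemma row_two (hs : s ∈ Sset n (Pi.single i 1)) (r c c' : ℕ) (hne : c ≠ c') :
    sval n s r c + sval n s r c' ≤ if r ≤ (i : ℕ) then 1 else 0 := by
  by_cases hv : sval n s r c = 0
  · rw [hv, Nat.zero_add]
    exact le_trans (Nat.le_add_right _ _) (row_le hs r c')
  by_cases hv' : sval n s r c' = 0
  · rw [hv', Nat.add_zero]
    exact le_trans (Nat.le_add_right _ _) (row_le hs r c)
  obtain ⟨hr, hc1, hc2⟩ := sval_support hv
  obtain ⟨_, hc1', hc2'⟩ := sval_support hv'
  have hb := hs.1 (rowPath n r hr)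
  rw [bound_odd _ i rfl] at hb
  have hstart : (((rowPath n r hr).p 0).1.1 : ℕ) = r := rfl
  rw [hstart] at hb
  refine le_trans ?_ hb
  refine le_trans ?_ (pathSum_ge_two _ s ⟨c - r, by simp only [rowPath, ofFn]; omega⟩
    ⟨c' - r, by simp only [rowPath, ofFn]; omega⟩ ?_)
  · rw [rowPath_sval hr s hc1 hc2, rowPath_sval hr s hc1' hc2']
  · intro hEq
    rw [Fin.mk.injEq] at hEq
    omega

end Facts
lemma ofFn_sval (n len : ℕ) (f : ℕ → ℕ × ℕ) (odd : Bool) (hv) (hd) (hst) (he)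
    (s : RootIdx n → ℕ) (t : Fin (len+1)) :
    s (Sum.inl ((ofFn n len f odd hv hd hst he).p t)) = sval n s (f t.val).1 (f t.val).2 :=
  (sval_inl s _).symm

/-- The even path from `α_{r+1}` right to column `c` then down to `α_{c+1}`. -/
def colPath (n r c : ℕ) (hrc : r ≤ c) (hc : c + 1 < n) : OSPath n :=
  ofFn n (2*(c-r)) (fun t => (r + (t - (c-r)), min (r+t) c)) false
    (by intro t ht; dsimp only; omega)
    (by dsimp only; omega)
    (by intro t ht; dsimp only; omega)
    (by simp only [Bool.false_eq_true, if_false]; omega)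

/-- Entries with column `< i` vanish. -/
lemma col_small (hn : 0 < n) {i : Fin n} {s : RootIdx n → ℕ}
    (hs : s ∈ Sset n (Pi.single i 1)) (r c : ℕ) (hc : c < (i : ℕ)) :
    sval n s r c = 0 := by
  by_contra hv
  obtain ⟨hr, hc1, hc2⟩ := sval_support hv
  have hcn : c + 1 < n := by have := i.2; omega
  have hb := hs.1 (colPath n r c hc1 hcn)
  rw [bound_even _ i rfl] at hb
  have hstart : (((colPath n r c hc1 hcn).p 0).1.1 : ℕ) = r + (0 - (c-r)) := rfl
  have hlast : (((colPath n r c hc1 hcn).p (Fin.last _)).1.1 : ℕ) =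
      r + (2*(c-r) - (c-r)) := rfl
  rw [hstart, hlast, if_neg (by omega)] at hb
  have ht : s (Sum.inl ((colPath n r c hc1 hcn).p
        ⟨c - r, by show c - r < 2*(c-r)+1; omega⟩)) =
      sval n s (r + ((c-r) - (c-r))) (min (r + (c-r)) c) := (sval_inl s _).symm
  have heqc : sval n s (r + ((c-r) - (c-r))) (min (r + (c-r)) c) = sval n s r c := by
    congr 1 <;> omega
  have hle := le_trans (le_trans (Nat.le_add_right _ _)
    (pathSum_ge_one (colPath n r c hc1 hcn) s ⟨c - r, by show c - r < 2*(c-r)+1; omega⟩)) hb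
  rw [ht, heqc] at hle
  omega
/-- Coordinate function for the hook path through `(r,c)` and `(r',c')`. -/
def zf (r r' c : ℕ) : ℕ → ℕ × ℕ := fun t =>
  (min (r + (t - (max c r' - r))) r',
   min (r+t) (max c r') + (t - ((max c r' - r) + (r' - r))))

/-- Length of the hook path. -/
def zlen (n r r' c : ℕ) : ℕ :=
  (max c r' - r) + (r' - r) + (2*n - 2 - r' - max c r')

set_option maxHeartbeats 1000000 in
/-- The odd hook path through two points. -/
def zigzagPath (n r r' c c' : ℕ) (h1 : r ≤ c) (h2 : r < r') (h3 : c ≤ c')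
    (h4 : r' ≤ c') (h5 : c' ≤ 2*n-2-r') (h6 : r' < n) : OSPath n :=
  ofFn n (zlen n r r' c) (zf r r' c) true
    (by intro t ht; simp only [zlen] at ht; simp only [zf]; omega)
    (by simp only [zf]; omega)
    (by intro t ht; simp only [zlen] at ht; simp only [zf]; omega)
    (by simp only [if_true, zf, zlen]; omega)

set_option maxHeartbeats 1000000 in
/-- No entry weakly to the right in a strictly lower row. -/
lemma no_se {n : ℕ} {i : Fin n} {s : RootIdx n → ℕ}
    (hs : s ∈ Sset n (Pi.single i 1)) {r r' c c' : ℕ} (hrr : r < r') (hcc : c ≤ c')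
    (hv : sval n s r c ≠ 0) : sval n s r' c' = 0 := by
  by_contra hv'
  obtain ⟨hrn, hrc, hcb⟩ := sval_support hv
  obtain ⟨hrn', hrc', hcb'⟩ := sval_support hv'
  set P := zigzagPath n r r' c c' hrc hrr hcc hrc' hcb' hrn' with hP
  have hb := hs.1 P
  rw [bound_odd _ i rfl] at hb
  have htA : (c-r) < zlen n r r' c + 1 := by simp only [zlen]; omega
  have htB : (max c r' - r) + (r' - r) + (c' - max c r') < zlen n r r' c + 1 := by
    simp only [zlen]; omega
  have hA : s (Sum.inl (P.p ⟨c-r, htA⟩)) = sval n s (zf r r' c (c-r)).1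
      (zf r r' c (c-r)).2 := (sval_inl s _).symm
  have hB : s (Sum.inl (P.p ⟨(max c r' - r) + (r' - r) + (c' - max c r'), htB⟩)) =
      sval n s (zf r r' c ((max c r' - r) + (r' - r) + (c' - max c r'))).1
      (zf r r' c ((max c r' - r) + (r' - r) + (c' - max c r'))).2 :=
    (sval_inl s _).symm
  have eA1 : (zf r r' c (c-r)).1 = r := by simp only [zf]; omega
  have eA2 : (zf r r' c (c-r)).2 = c := by simp only [zf]; omega
  have eB1 : (zf r r' c ((max c r' - r) + (r' - r) + (c' - max c r'))).1 = r' := by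
    simp only [zf]; omega
  have eB2 : (zf r r' c ((max c r' - r) + (r' - r) + (c' - max c r'))).2 = c' := by
    simp only [zf]; omega
  rw [eA1, eA2] at hA
  rw [eB1, eB2] at hB
  have hne : (⟨c-r, htA⟩ : Fin (P.len + 1)) ≠
      ⟨(max c r' - r) + (r' - r) + (c' - max c r'), htB⟩ := by
    intro hEq
    have hEq : c - r = (max c r' - r) + (r' - r) + (c' - max c r') := congrArg Fin.val hEq
    omega
  have h2 := pathSum_ge_two P s _ _ hne
  rw [hA, hB] at h2
  have := le_trans h2 hb
  split_ifs at this <;> omega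
section Struct
variable {n : ℕ} {i : Fin n} {s : RootIdx n → ℕ}

/-- Rows beyond `i` are empty. -/
lemma row_big (hs : s ∈ Sset n (Pi.single i 1)) {r c : ℕ} (hr : (i:ℕ) < r) :
    sval n s r c = 0 := by
  have := row_le hs r c
  rw [if_neg (by omega)] at this
  omega

lemma oval_gt (hs : s ∈ Sset n (Pi.single i 1)) {j : ℕ} (hj : (i:ℕ) < j) :
    oval n s j = 0 := by
  have := row_le hs j j
  rw [if_neg (by omega)] at this
  omega

lemma sval_le_one (hs : s ∈ Sset n (Pi.single i 1)) (r c : ℕ) : sval n s r c ≤ 1 := by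
  have := row_le hs r c
  split_ifs at this <;> omega

lemma oval_le_one (hs : s ∈ Sset n (Pi.single i 1)) (j : ℕ) : oval n s j ≤ 1 := by
  have := row_le hs j j
  split_ifs at this <;> omega

/-- At most one nonzero entry per row. -/
lemma row_unique (hs : s ∈ Sset n (Pi.single i 1)) {r c c' : ℕ}
    (hv : sval n s r c ≠ 0) (hv' : sval n s r c' ≠ 0) : c = c' := by
  by_contra hne
  have := row_two hs r c c' hne
  split_ifs at this <;> omega

/-- A nonzero odd value forces the row to be empty. -/
lemma oval_empty (hs : s ∈ Sset n (Pi.single i 1)) {r : ℕ} (ho : oval n s r ≠ 0)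
    (c : ℕ) : sval n s r c = 0 := by
  have := row_le hs r c
  split_ifs at this <;> omega

/-- Nonzero entries have `r ≤ i ≤ c`. -/
lemma sval_window (hn : 0 < n) (hs : s ∈ Sset n (Pi.single i 1)) {r c : ℕ}
    (hv : sval n s r c ≠ 0) : r ≤ (i:ℕ) ∧ (i:ℕ) ≤ c := by
  constructor
  · by_contra hr; exact hv (row_big hs (by omega))
  · by_contra hc; exact hv (col_small hn hs r c (by omega))

end Struct

/-- The tableau entry determined by a nonzero entry in column `c`. -/
def colEntry (n c : ℕ) : ℕ :=
  if c + 2 ≤ n then 3*(c+1)+1 else if c+1 = n then 3*(n-1)+2 else 3*(2*n-2-c)+2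

lemma colEntry_cases (n c : ℕ) :
    (c+2 ≤ n ∧ colEntry n c = 3*(c+1)+1) ∨ (n ≤ c+1 ∧ colEntry n c = 3*(2*n-2-c)+2) := by
  rw [colEntry]
  split_ifs <;> [left; right; right] <;> constructor <;> omega

lemma colEntry_inj {n c c' : ℕ} (hc : c ≤ 2*n-2) (hc' : c' ≤ 2*n-2)
    (h : colEntry n c = colEntry n c') : c = c' := by
  rcases colEntry_cases n c with ⟨h1, e1⟩ | ⟨h1, e1⟩ <;>
    rcases colEntry_cases n c' with ⟨h2, e2⟩ | ⟨h2, e2⟩ <;> rw [e1, e2] at h <;> omega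

section Erow
variable {n : ℕ} {i : Fin n} {s : RootIdx n → ℕ}

lemma erow_empty {r : ℕ} (hE : ∀ c, sval n s r c = 0) : erow n s r = 3*r+1 := by
  rw [erow, if_neg]
  push_neg
  exact hE

lemma erow_nonzero (hs : s ∈ Sset n (Pi.single i 1)) {r c : ℕ}
    (hv : sval n s r c ≠ 0) : erow n s r = colEntry n c := by
  have hne : {c | sval n s r c ≠ 0}.Nonempty := ⟨c, hv⟩
  have hInf : sInf {c | sval n s r c ≠ 0} = c :=
    row_unique hs (Nat.sInf_mem hne) hv
  rw [erow, if_pos ⟨c, hv⟩]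
  simp only [hInf]
  rfl

/-- The value of the final entry for an empty row. -/
lemma val_empty {r : ℕ} (hE : ∀ c, sval n s r c = 0) :
    oddRepl n s (erow n s r) = if oval n s r ≠ 0 then 3*r else 3*r+1 := by
  rw [erow_empty hE, oddRepl]
  have h2 : (3*r+1) / 3 = r := by omega
  rw [h2]
  by_cases ho : oval n s r ≠ 0
  · rw [if_pos ⟨by omega, ho⟩, if_pos ho]; omega
  · rw [if_neg (fun hh => ho hh.2), if_neg ho]

/-- The value of the final entry for a nonempty row. -/
lemma val_nonzero (hn : 0 < n) (hs : s ∈ Sset n (Pi.single i 1)) {r c : ℕ}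
    (hv : sval n s r c ≠ 0) : oddRepl n s (erow n s r) = colEntry n c := by
  rw [erow_nonzero hs hv, oddRepl]
  rcases colEntry_cases n c with ⟨h1, e1⟩ | ⟨h1, e1⟩
  · have hci : (i:ℕ) ≤ c := (sval_window hn hs hv).2
    have ho : oval n s (c+1) = 0 := oval_gt hs (by omega)
    rw [if_neg]
    intro ⟨hm, ho'⟩
    rw [e1] at hm ho'
    have : (3*(c+1)+1) / 3 = c + 1 := by omega
    rw [this] at ho'
    exact ho' ho
  · rw [if_neg]
    intro ⟨hm, _⟩
    rw [e1] at hm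
    omega

end Erow
section Mem
variable {n : ℕ} {i : Fin n} {s : RootIdx n → ℕ}

lemma mem_KT {w k : ℕ} : w ∈ KTmap n k s ↔ ∃ r, r < k ∧ oddRepl n s (erow n s r) = w := by
  simp [KTmap]

/-- Characterization of odd roots via the tableau. -/
lemma M0 (hn : 0 < n) (hs : s ∈ Sset n (Pi.single i 1)) (j : ℕ) :
    oval n s j ≠ 0 ↔ 3*j ∈ KTmap n ((i:ℕ)+1) s := by
  constructor
  · intro ho
    have hj : j ≤ (i:ℕ) := by
      by_contra hj
      exact ho (oval_gt hs (by omega))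
    have hE : ∀ c, sval n s j c = 0 := oval_empty hs ho
    rw [mem_KT]
    exact ⟨j, by omega, by rw [val_empty hE, if_pos ho]⟩
  · intro hw
    rw [mem_KT] at hw
    obtain ⟨r, hr, hval⟩ := hw
    by_cases hE : ∀ c, sval n s r c = 0
    · rw [val_empty hE] at hval
      split_ifs at hval with ho
      · have : r = j := by omega
        rwa [← this]
      · omega
    · push_neg at hE
      obtain ⟨c, hc⟩ := hE
      rw [val_nonzero hn hs hc] at hval
      rcases colEntry_cases n c with ⟨h1, e1⟩ | ⟨h1, e1⟩ <;> rw [e1] at hval <;> omega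

/-- Characterization of empty rows via the tableau. -/
lemma M1 (hn : 0 < n) (hs : s ∈ Sset n (Pi.single i 1)) {r : ℕ} (hr : r ≤ (i:ℕ)) :
    (∀ c, sval n s r c = 0) ↔
      (3*r ∈ KTmap n ((i:ℕ)+1) s ∨ 3*r+1 ∈ KTmap n ((i:ℕ)+1) s) := by
  constructor
  · intro hE
    by_cases ho : oval n s r ≠ 0
    · left
      rw [mem_KT]
      exact ⟨r, by omega, by rw [val_empty hE, if_pos ho]⟩
    · right
      rw [mem_KT]
      exact ⟨r, by omega, by rw [val_empty hE, if_neg ho]⟩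
  · intro hw
    rcases hw with hw | hw
    · exact oval_empty hs ((M0 hn hs r).mpr hw)
    · rw [mem_KT] at hw
      obtain ⟨r', hr', hval⟩ := hw
      by_cases hE : ∀ c, sval n s r' c = 0
      · rw [val_empty hE] at hval
        split_ifs at hval with ho
        · omega
        · have : r' = r := by omega
          rwa [this] at hE
      · push_neg at hE
        obtain ⟨c, hc⟩ := hE
        rw [val_nonzero hn hs hc] at hval
        have hci : (i:ℕ) ≤ c := (sval_window hn hs hc).2
        rcases colEntry_cases n c with ⟨h1, e1⟩ | ⟨h1, e1⟩ <;> rw [e1] at hval <;> omega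

/-- Characterization of occupied columns via the tableau. -/
lemma M2 (hn : 0 < n) (hs : s ∈ Sset n (Pi.single i 1)) {c : ℕ}
    (hci : (i:ℕ) ≤ c) (hcb : c ≤ 2*n-2) :
    (∃ r, sval n s r c ≠ 0) ↔ colEntry n c ∈ KTmap n ((i:ℕ)+1) s := by
  constructor
  · intro ⟨r, hv⟩
    rw [mem_KT]
    have hri : r ≤ (i:ℕ) := (sval_window hn hs hv).1
    exact ⟨r, by omega, val_nonzero hn hs hv⟩
  · intro hw
    rw [mem_KT] at hw
    obtain ⟨r', hr', hval⟩ := hw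
    by_cases hE : ∀ c, sval n s r' c = 0
    · rw [val_empty hE] at hval
      exfalso
      rcases colEntry_cases n c with ⟨h1, e1⟩ | ⟨h1, e1⟩ <;> rw [e1] at hval <;>
        split_ifs at hval <;> omega
    · push_neg at hE
      obtain ⟨c'', hc''⟩ := hE
      rw [val_nonzero hn hs hc''] at hval
      have hcb'' : c'' ≤ 2*n-2 := by
        have := (sval_support hc'').2.2
        omega
      rw [colEntry_inj hcb'' hcb hval] at hc''
      exact ⟨r', hc''⟩

end Mem
/-- The set of nonempty rows. -/
noncomputable def RowsF (n k : ℕ) (s : RootIdx n → ℕ) : Finset ℕ :=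
  (Finset.range (k+1)).filter (fun r => ∃ c, sval n s r c ≠ 0)

/-- The set of occupied columns. -/
noncomputable def ColsF (n : ℕ) (s : RootIdx n → ℕ) : Finset ℕ :=
  (Finset.range (2*n-1)).filter (fun c => ∃ r, sval n s r c ≠ 0)

/-- The unique occupied column of a row. -/
noncomputable def colOf (n : ℕ) (s : RootIdx n → ℕ) (r : ℕ) : ℕ :=
  sInf {c | sval n s r c ≠ 0}

section Match
variable {n : ℕ} {i : Fin n} {s : RootIdx n → ℕ}

lemma mem_RowsF (hs : s ∈ Sset n (Pi.single i 1)) {r : ℕ} :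
    r ∈ RowsF n (i:ℕ) s ↔ ∃ c, sval n s r c ≠ 0 := by
  rw [RowsF, Finset.mem_filter, Finset.mem_range]
  constructor
  · exact fun h => h.2
  · intro h
    obtain ⟨c, hc⟩ := h
    refine ⟨?_, ⟨c, hc⟩⟩
    have : r ≤ (i:ℕ) := by
      by_contra hr
      exact hc (row_big hs (by omega))
    omega

lemma mem_ColsF (hn : 0 < n) {c : ℕ} :
    c ∈ ColsF n s ↔ ∃ r, sval n s r c ≠ 0 := by
  rw [ColsF, Finset.mem_filter, Finset.mem_range]
  constructor
  · exact fun h => h.2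
  · intro h
    obtain ⟨r, hr⟩ := h
    have := (sval_support hr).2.2
    have := (sval_support hr).1
    exact ⟨by omega, ⟨r, hr⟩⟩

lemma colOf_spec (hs : s ∈ Sset n (Pi.single i 1)) {r c : ℕ}
    (hv : sval n s r c ≠ 0) : colOf n s r = c :=
  row_unique hs (Nat.sInf_mem (⟨c, hv⟩ : {c | sval n s r c ≠ 0}.Nonempty)) hv

/-- The rank of a nonzero entry's row equals the corank of its column. -/
lemma cardEq (hn : 0 < n) (hs : s ∈ Sset n (Pi.single i 1)) {r c : ℕ}
    (hv : sval n s r c ≠ 0) :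
    ((RowsF n (i:ℕ) s).filter (· < r)).card = ((ColsF n s).filter (c < ·)).card := by
  refine Finset.card_bij (fun r' _ => colOf n s r') ?_ ?_ ?_
  · intro r' hr'
    rw [Finset.mem_filter] at hr'
    obtain ⟨hr'm, hr'lt⟩ := hr'
    obtain ⟨c', hc'⟩ := (mem_RowsF hs).mp hr'm
    show colOf n s r' ∈ _
    rw [colOf_spec hs hc', Finset.mem_filter]
    refine ⟨(mem_ColsF hn).mpr ⟨r', hc'⟩, ?_⟩
    by_contra hle
    exact hv (no_se hs hr'lt (by omega) hc')
  · intro r1 h1 r2 h2 hcol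
    rw [Finset.mem_filter] at h1 h2
    obtain ⟨c1, hc1⟩ := (mem_RowsF hs).mp h1.1
    obtain ⟨c2, hc2⟩ := (mem_RowsF hs).mp h2.1
    have hcol' : colOf n s r1 = colOf n s r2 := hcol
    rw [colOf_spec hs hc1, colOf_spec hs hc2] at hcol'
    subst hcol'
    by_contra hne
    rcases Nat.lt_or_ge r1 r2 with hlt | hge
    · exact hc2 (no_se hs hlt le_rfl hc1)
    · exact hc1 (no_se hs (by omega) le_rfl hc2)
  · intro c' hc'
    rw [Finset.mem_filter] at hc'
    obtain ⟨hc'm, hc'gt⟩ := hc'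
    obtain ⟨r'', hr''⟩ := (mem_ColsF hn).mp hc'm
    have hrr : r'' < r := by
      rcases Nat.lt_or_ge r'' r with hlt | hge
      · exact hlt
      · exfalso
        rcases Nat.eq_or_lt_of_le hge with heq | hlt
        · rw [← heq] at hr''
          exact absurd (row_unique hs hv hr'') (by omega)
        · exact hr'' (no_se hs hlt (by omega) hv)
    refine ⟨r'', Finset.mem_filter.mpr ⟨(mem_RowsF hs).mpr ⟨c', hr''⟩, hrr⟩, ?_⟩
    show colOf n s r'' = c'
    exact colOf_spec hs hr''

/-- Recovery of an entry from the matching data. -/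
lemma sval_of_data (hn : 0 < n) (hs : s ∈ Sset n (Pi.single i 1)) {r c : ℕ}
    (hr : r ∈ RowsF n (i:ℕ) s) (hc : c ∈ ColsF n s)
    (hcard : ((RowsF n (i:ℕ) s).filter (· < r)).card = ((ColsF n s).filter (c < ·)).card) :
    sval n s r c ≠ 0 := by
  obtain ⟨r'', hr''⟩ := (mem_ColsF hn).mp hc
  have hce := cardEq hn hs hr''
  have hreq : r = r'' := by
    by_contra hne
    have hrm : r'' ∈ RowsF n (i:ℕ) s := (mem_RowsF hs).mpr ⟨c, hr''⟩
    rcases Nat.lt_or_ge r r'' with hlt | hge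
    · have hsub : (RowsF n (i:ℕ) s).filter (· < r) ⊆ (RowsF n (i:ℕ) s).filter (· < r'') := by
        intro x hx
        rw [Finset.mem_filter] at hx ⊢
        exact ⟨hx.1, by omega⟩
      have hss := (Finset.ssubset_iff_of_subset hsub).mpr
        ⟨r, Finset.mem_filter.mpr ⟨hr, hlt⟩, by
          intro hmem
          have := (Finset.mem_filter.mp hmem).2
          omega⟩
      have := Finset.card_lt_card hss
      omega
    · have hlt : r'' < r := by omega
      have hsub : (RowsF n (i:ℕ) s).filter (· < r'') ⊆ (RowsF n (i:ℕ) s).filter (· < r) := by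
        intro x hx
        rw [Finset.mem_filter] at hx ⊢
        exact ⟨hx.1, by omega⟩
      have hss := (Finset.ssubset_iff_of_subset hsub).mpr
        ⟨r'', Finset.mem_filter.mpr ⟨hrm, hlt⟩, by
          intro hmem
          have := (Finset.mem_filter.mp hmem).2
          omega⟩
      have := Finset.card_lt_card hss
      omega
  rw [hreq]
  exact hr''

end Match
section Final
variable {n : ℕ} {i : Fin n} {s : RootIdx n → ℕ}

lemma rows_char (hn : 0 < n) (hs : s ∈ Sset n (Pi.single i 1)) (r : ℕ) :
    (∃ c, sval n s r c ≠ 0) ↔ (r ≤ (i:ℕ) ∧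
      ¬(3*r ∈ KTmap n ((i:ℕ)+1) s ∨ 3*r+1 ∈ KTmap n ((i:ℕ)+1) s)) := by
  constructor
  · intro ⟨c, hv⟩
    refine ⟨(sval_window hn hs hv).1, ?_⟩
    intro hmark
    exact hv ((M1 hn hs (sval_window hn hs hv).1).mpr hmark c)
  · intro ⟨hr, hmark⟩
    by_contra hE
    push_neg at hE
    exact hmark ((M1 hn hs hr).mp hE)

lemma cols_char (hn : 0 < n) (hs : s ∈ Sset n (Pi.single i 1)) (c : ℕ) :
    (∃ r, sval n s r c ≠ 0) ↔ ((i:ℕ) ≤ c ∧ c ≤ 2*n-2 ∧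
      colEntry n c ∈ KTmap n ((i:ℕ)+1) s) := by
  constructor
  · intro ⟨r, hv⟩
    have h1 := (sval_window hn hs hv).2
    have h2 := (sval_support hv).2.2
    exact ⟨h1, by omega, (M2 hn hs h1 (by omega)).mp ⟨r, hv⟩⟩
  · intro ⟨h1, h2, h3⟩
    exact (M2 hn hs h1 h2).mpr h3

variable {s' : RootIdx n → ℕ}

lemma RowsF_eq (hn : 0 < n) (hs : s ∈ Sset n (Pi.single i 1))
    (hs' : s' ∈ Sset n (Pi.single i 1))
    (h : KTmap n ((i:ℕ)+1) s = KTmap n ((i:ℕ)+1) s') :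
    RowsF n (i:ℕ) s = RowsF n (i:ℕ) s' := by
  ext r
  rw [mem_RowsF hs, mem_RowsF hs', rows_char hn hs, rows_char hn hs', h]

lemma ColsF_eq (hn : 0 < n) (hs : s ∈ Sset n (Pi.single i 1))
    (hs' : s' ∈ Sset n (Pi.single i 1))
    (h : KTmap n ((i:ℕ)+1) s = KTmap n ((i:ℕ)+1) s') :
    ColsF n s = ColsF n s' := by
  ext c
  rw [mem_ColsF hn, mem_ColsF hn, cols_char hn hs, cols_char hn hs', h]

lemma sval_transfer (hn : 0 < n) (hs : s ∈ Sset n (Pi.single i 1))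
    (hs' : s' ∈ Sset n (Pi.single i 1))
    (hR : RowsF n (i:ℕ) s = RowsF n (i:ℕ) s') (hC : ColsF n s = ColsF n s')
    {r c : ℕ} (hv : sval n s r c ≠ 0) : sval n s' r c ≠ 0 := by
  have hr : r ∈ RowsF n (i:ℕ) s := (mem_RowsF hs).mpr ⟨c, hv⟩
  have hc : c ∈ ColsF n s := (mem_ColsF hn).mpr ⟨r, hv⟩
  have hcard := cardEq hn hs hv
  exact sval_of_data hn hs' (hR ▸ hr) (hC ▸ hc) (by rw [← hR, ← hC]; exact hcard)

lemma oval_inr (j : Fin n) : oval n s (j:ℕ) = s (Sum.inr j) := by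
  rw [oval, dif_pos j.2]

end Final
/-- The map `s ↦ T(s)` from the lattice points `S(ϖ_i)` of the orthosymplectic Dyck path
polytope of `osp(1,2n)` to KT-tableaux with `i+1` boxes (`i : Fin n`, 0-based) is
injective. -/
theorem stmt9 (n : ℕ) (hn : 0 < n) (i : Fin n)
    (s s' : RootIdx n → ℕ)
    (hs : s ∈ Sset n (Pi.single i 1)) (hs' : s' ∈ Sset n (Pi.single i 1))
    (h : KTmap n ((i : ℕ) + 1) s = KTmap n ((i : ℕ) + 1) s') :
    s = s' := by
  have hR := RowsF_eq hn hs hs' h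
  have hC := ColsF_eq hn hs hs' h
  funext x
  cases x with
  | inr j =>
    have hiff : s (Sum.inr j) ≠ 0 ↔ s' (Sum.inr j) ≠ 0 := by
      rw [← oval_inr (s := s) j, ← oval_inr (s := s') j, M0 hn hs, M0 hn hs', h]
    have hA : s (Sum.inr j) ≤ 1 := hs.2 j
    have hA' : s' (Sum.inr j) ≤ 1 := hs'.2 j
    by_cases hz : s (Sum.inr j) = 0
    · have hz' : s' (Sum.inr j) = 0 := by
        by_contra hnz
        exact (hiff.mpr hnz) hz
      rw [hz, hz']
    · have hnz' := hiff.mp hz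
      omega
  | inl q =>
    have hiff : sval n s (q.1.1 : ℕ) (q.1.2 : ℕ) ≠ 0 ↔
        sval n s' (q.1.1 : ℕ) (q.1.2 : ℕ) ≠ 0 :=
      ⟨sval_transfer hn hs hs' hR hC, sval_transfer hn hs' hs hR.symm hC.symm⟩
    have hA := sval_le_one hs (q.1.1 : ℕ) (q.1.2 : ℕ)
    have hA' := sval_le_one hs' (q.1.1 : ℕ) (q.1.2 : ℕ)
    have : sval n s (q.1.1 : ℕ) (q.1.2 : ℕ) = sval n s' (q.1.1 : ℕ) (q.1.2 : ℕ) := by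
      by_cases hz : sval n s (q.1.1 : ℕ) (q.1.2 : ℕ) = 0
      · have hz' : sval n s' (q.1.1 : ℕ) (q.1.2 : ℕ) = 0 := by
          by_contra hnz
          exact (hiff.mpr hnz) hz
        rw [hz, hz']
      · have hnz' := hiff.mp hz
        omega
    rw [← sval_inl s q, ← sval_inl s' q, this]
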